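/- Let G be the graph from the previous construction (K_{k+2} on {r,1,...,k+1}, plus t0 adjacent to 1,...,k+1, plus t_i adjacent to t0 and i). In any spanning tree T of G with dist_T(r,v)=dist_G(r,v) for all v, the vertex t0 is adjacent in T to exactly one vertex among {1,...,k+1}. Consequently, given any family of k spanning trees T^1,...,T^k of G each satisfying this distance-preservation property, there exists an index i ∈ {1,...,k+1} such that for every j, dist_{T^j}(t0,t_i) ≥ 4 > dist_G(t0,t_i) + 2. -/

import Mathlib

open SimpleGraph

inductive GVtx (k : ℕ) : Type
  | r : GVtx k
  | base : Fin (k + 1) → GVtx k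
  | t0 : GVtx k
  | t : Fin (k + 1) → GVtx k

/-- K_{k+2} on {r, 1, ..., k+1}, plus t0 adjacent to 1,...,k+1,
plus t_i adjacent to t0 and i. -/
def gadgetRel (k : ℕ) : GVtx k → GVtx k → Prop
  | .r, .base _ => True
  | .base _, .base _ => True
  | .t0, .base _ => True
  | .t i, .base j => i = j
  | .t _, .t0 => True
  | _, _ => False

def gadgetG (k : ℕ) : SimpleGraph (GVtx k) := SimpleGraph.fromRel (gadgetRel k)

/-- A spanning tree of `gadgetG k` preserving all distances from the root. -/
def IsFCTree (k : ℕ) (T : SimpleGraph (GVtx k)) : Prop :=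
  T ≤ gadgetG k ∧ T.Connected ∧ T.IsAcyclic ∧
    ∀ v : GVtx k, T.dist .r v = (gadgetG k).dist .r v

namespace Gadget

variable {k : ℕ}

lemma adj_r_iff {v : GVtx k} : (gadgetG k).Adj .r v ↔ ∃ m, v = .base m := by
  cases v <;> simp [gadgetG, SimpleGraph.fromRel_adj, gadgetRel]

lemma adj_t0_iff {v : GVtx k} :
    (gadgetG k).Adj .t0 v ↔ (∃ m, v = .base m) ∨ ∃ m, v = .t m := by
  cases v <;> simp [gadgetG, SimpleGraph.fromRel_adj, gadgetRel]

lemma adj_to_t_iff {i : Fin (k+1)} {v : GVtx k} :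
    (gadgetG k).Adj v (.t i) ↔ v = .base i ∨ v = .t0 := by
  cases v <;> simp [gadgetG, SimpleGraph.fromRel_adj, gadgetRel, eq_comm]

lemma adj_base_base {a b : Fin (k+1)} (h : (gadgetG k).Adj (.base a) (.base b)) : a ≠ b := by
  rintro rfl; exact h.ne rfl

lemma adj_r_base (i : Fin (k+1)) : (gadgetG k).Adj .r (.base i) :=
  adj_r_iff.mpr ⟨i, rfl⟩

lemma adj_base_t0 (i : Fin (k+1)) : (gadgetG k).Adj (.base i) .t0 :=
  (adj_t0_iff.mpr (Or.inl ⟨i, rfl⟩)).symm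

lemma adj_base_t (i : Fin (k+1)) : (gadgetG k).Adj (.base i) (.t i) :=
  adj_to_t_iff.mpr (Or.inl rfl)

lemma adj_t0_t (i : Fin (k+1)) : (gadgetG k).Adj .t0 (.t i) :=
  adj_to_t_iff.mpr (Or.inr rfl)

lemma distG_r_base (i : Fin (k+1)) : (gadgetG k).dist .r (.base i) = 1 :=
  dist_eq_one_iff_adj.mpr (adj_r_base i)

lemma distG_r_t0 : (gadgetG k).dist .r .t0 = 2 := by
  have h2 : (gadgetG k).dist .r .t0 ≤ 2 :=
    le_trans (dist_le (Walk.cons (adj_r_base 0) (Walk.cons (adj_base_t0 0) Walk.nil))) (by simp)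
  have h0 : (gadgetG k).dist .r .t0 ≠ 0 := by
    intro h
    rcases dist_eq_zero_iff_eq_or_not_reachable.mp h with h | h
    · exact nomatch h
    · exact h (Walk.cons (adj_r_base 0) (Walk.cons (adj_base_t0 0) Walk.nil)).reachable
  have h1 : (gadgetG k).dist .r .t0 ≠ 1 := by
    intro h
    rcases adj_r_iff.mp (dist_eq_one_iff_adj.mp h) with ⟨m, hm⟩
    exact nomatch hm
  omega

lemma distG_r_t (i : Fin (k+1)) : (gadgetG k).dist .r (.t i) = 2 := by
  have h2 : (gadgetG k).dist .r (.t i) ≤ 2 :=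
    le_trans (dist_le (Walk.cons (adj_r_base i) (Walk.cons (adj_base_t i) Walk.nil))) (by simp)
  have h0 : (gadgetG k).dist .r (.t i) ≠ 0 := by
    intro h
    rcases dist_eq_zero_iff_eq_or_not_reachable.mp h with h | h
    · exact nomatch h
    · exact h (Walk.cons (adj_r_base i) (Walk.cons (adj_base_t i) Walk.nil)).reachable
  have h1 : (gadgetG k).dist .r (.t i) ≠ 1 := by
    intro h
    rcases adj_r_iff.mp (dist_eq_one_iff_adj.mp h) with ⟨m, hm⟩
    exact nomatch hm
  omega

variable {T : SimpleGraph (GVtx k)}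

/-- Every base vertex is a tree-child of the root. -/
lemma tree_adj_r_base (hT : IsFCTree k T) (i : Fin (k+1)) : T.Adj .r (.base i) := by
  have h := hT.2.2.2 (.base i)
  rw [distG_r_base] at h
  exact dist_eq_one_iff_adj.mp h

/-- `t i` is attached to `base i` in the tree. -/
lemma tree_adj_base_t (hT : IsFCTree k T) (i : Fin (k+1)) : T.Adj (.base i) (.t i) := by
  have h := hT.2.2.2 (.t i)
  rw [distG_r_t] at h
  obtain ⟨p, hp⟩ := (hT.2.1 .r (.t i)).exists_walk_length_eq_dist
  rw [h] at hp
  cases p with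
  | cons h₁ q =>
    cases q with
    | nil => simp at hp
    | cons h₂ q₂ =>
      cases q₂ with
      | nil =>
        rcases adj_r_iff.mp (hT.1 h₁) with ⟨m, rfl⟩
        rcases adj_to_t_iff.mp (hT.1 h₂) with hm | hm
        · obtain rfl : m = i := by injection hm
          exact h₂
        · exact nomatch hm
      | cons h₃ q₃ => simp [Nat.succ_eq_add_one] at hp

lemma no_base_base_edge (hT : IsFCTree k T) {a b : Fin (k+1)} :
    ¬ T.Adj (.base a) (.base b) := by
  intro h
  have hne : a ≠ b := adj_base_base (hT.1 h)
  have heq := isAcyclic_iff_path_unique.mp hT.2.2.1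
    (⟨.cons h .nil, by rw [Walk.isPath_def]; simp [hne]⟩ : T.Path (.base a) (.base b))
    ⟨.cons (tree_adj_r_base hT a).symm (.cons (tree_adj_r_base hT b) .nil),
      by rw [Walk.isPath_def]; simp [hne]⟩
  have hs := congrArg (fun q : T.Path (GVtx.base a) (GVtx.base b) =>
    (q : T.Walk (.base a) (.base b)).support) heq
  simp at hs

lemma no_t0_t_edge (hT : IsFCTree k T) {m : Fin (k+1)} : ¬ T.Adj .t0 (.t m) := by
  intro h
  have hd := hT.2.2.2 .t0
  rw [distG_r_t0] at hd
  obtain ⟨p, hp⟩ := (hT.2.1 .r .t0).exists_walk_length_eq_dist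
  rw [hd] at hp
  obtain ⟨j, hj⟩ : ∃ j : Fin (k+1), T.Adj (.base j) .t0 := by
    cases p with
    | cons h₁ q =>
      cases q with
      | nil => simp at hp
      | cons h₂ q₂ =>
        cases q₂ with
        | nil =>
          rcases adj_r_iff.mp (hT.1 h₁) with ⟨j, rfl⟩
          exact ⟨j, h₂⟩
        | cons h₃ q₃ => simp [Nat.succ_eq_add_one] at hp
  have heq := isAcyclic_iff_path_unique.mp hT.2.2.1
    (⟨.cons (tree_adj_r_base hT m) (.cons (tree_adj_base_t hT m) .nil),
      by rw [Walk.isPath_def]; simp⟩ : T.Path .r (.t m))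
    ⟨.cons (tree_adj_r_base hT j) (.cons hj (.cons h .nil)),
      by rw [Walk.isPath_def]; simp⟩
  have hs := congrArg (fun q : T.Path (GVtx.r) (GVtx.t m) =>
    (q : T.Walk .r (.t m)).support) heq
  simp at hs

/-- Part 1: t0 has exactly one base neighbor in the tree. -/
lemma unique_base_nbr (hT : IsFCTree k T) :
    ∃! i : Fin (k + 1), T.Adj .t0 (.base i) := by
  have hd := hT.2.2.2 .t0
  rw [distG_r_t0] at hd
  obtain ⟨p, hp⟩ := (hT.2.1 .r .t0).exists_walk_length_eq_dist
  rw [hd] at hp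
  obtain ⟨j, hj⟩ : ∃ j : Fin (k+1), T.Adj .t0 (.base j) := by
    cases p with
    | cons h₁ q =>
      cases q with
      | nil => simp at hp
      | cons h₂ q₂ =>
        cases q₂ with
        | nil =>
          rcases adj_r_iff.mp (hT.1 h₁) with ⟨j, rfl⟩
          exact ⟨j, h₂.symm⟩
        | cons h₃ q₃ => simp [Nat.succ_eq_add_one] at hp
  refine ⟨j, hj, fun m hm => ?_⟩
  by_contra hne
  have heq := isAcyclic_iff_path_unique.mp hT.2.2.1
    (⟨.cons (tree_adj_r_base hT m) (.cons hm.symm .nil),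
      by rw [Walk.isPath_def]; simp⟩ : T.Path .r .t0)
    ⟨.cons (tree_adj_r_base hT j) (.cons hj.symm .nil),
      by rw [Walk.isPath_def]; simp⟩
  have hs := congrArg (fun q : T.Path (GVtx.r) (GVtx.t0) =>
    (q : T.Walk .r .t0).support) heq
  simp at hs
  exact hne hs

/-- Part 2 core: if t0's unique base neighbor is not i, then t i is far from t0. -/
lemma far (hT : IsFCTree k T) {i j : Fin (k+1)}
    (hj : T.Adj .t0 (.base j)) (huniq : ∀ m, T.Adj .t0 (.base m) → m = j)
    (hne : i ≠ j) : 4 ≤ T.dist .t0 (.t i) := by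
  by_contra h4
  push_neg at h4
  obtain ⟨p, hp⟩ := (hT.2.1 .t0 (.t i)).exists_walk_length_eq_dist
  rw [← hp] at h4
  cases p with
  | cons h₁ q =>
    rcases adj_t0_iff.mp (hT.1 h₁) with ⟨m, rfl⟩ | ⟨m, rfl⟩
    · -- first step goes to a base vertex, which must be base j
      have hmj : m = j := huniq m h₁
      cases q with
      | cons h₂ q₂ =>
        cases q₂ with
        | nil =>
          -- edge base m -- t i in G forces m = i
          rcases adj_to_t_iff.mp (hT.1 h₂) with hm | hm
          · have hmi : m = i := by injection hm
            exact hne (hmi.symm.trans hmj)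
          · exact nomatch hm
        | cons h₃ q₃ =>
          cases q₃ with
          | nil =>
            -- t0, base m, y, t i with edges; y adj to t i
            rcases adj_to_t_iff.mp (hT.1 h₃) with rfl | rfl
            · exact no_base_base_edge hT h₂
            · exact no_t0_t_edge hT (h₃ : T.Adj .t0 (.t i))
          | cons h₄ q₄ =>
            simp only [Walk.length_cons] at h4
            omega
    · exact no_t0_t_edge hT h₁

end Gadget

theorem stmt3 :
    ∀ k : ℕ, 1 ≤ k →
    (∀ T : SimpleGraph (GVtx k), IsFCTree k T →
      ∃! i : Fin (k + 1), T.Adj .t0 (.base i)) ∧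
    (∀ Tf : Fin k → SimpleGraph (GVtx k), (∀ j, IsFCTree k (Tf j)) →
      ∃ i : Fin (k + 1), ∀ j : Fin k,
        4 ≤ (Tf j).dist .t0 (.t i) ∧ (gadgetG k).dist .t0 (.t i) + 2 < 4) := by
  intro k _
  refine ⟨fun T hT => Gadget.unique_base_nbr hT, fun Tf hTf => ?_⟩
  classical
  choose f hf huniq using fun j => Gadget.unique_base_nbr (hTf j)
  have hns : ¬ Function.Surjective f := by
    intro hs
    have := Fintype.card_le_of_surjective f hs
    simp only [Fintype.card_fin] at this
    omega
  rw [Function.Surjective] at hns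
  push_neg at hns
  obtain ⟨i, hi⟩ := hns
  refine ⟨i, fun j => ⟨?_, ?_⟩⟩
  · exact Gadget.far (hTf j) (hf j) (fun m hm => huniq j m hm) (fun h => hi j h.symm)
  · have : (gadgetG k).dist .t0 (.t i) = 1 := dist_eq_one_iff_adj.mpr (Gadget.adj_t0_t i)
    omega
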